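/- Let M ∈ {0,1}^{n×m} be a 'staircase' 0-1 matrix: whenever M_{ij} = 1 then M_{i'j'} = 1 for all i' ≥ i and j' ≤ j. Let S_M denote the Schur (entrywise) multiplication superoperator S_M[A] := A ∘ M on n×m complex matrices. Then the operator norm of S_M, as a map from (C^{n×m}, ‖·‖_op) to itself, satisfies ‖S_M‖ ≤ 1 + ⌈log₂(min(n,m))⌉. -/

import Mathlib

open Matrix

/-- The `ℓ₂ → ℓ₂` operator (spectral) norm of a rectangular complex matrix. -/
noncomputable def opNorm {m n : Type*} [Fintype m] [Fintype n] [DecidableEq n]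
    (A : Matrix m n ℂ) : ℝ :=
  ‖LinearMap.toContinuousLinearMap (Matrix.toEuclideanLin A)‖

lemma opNorm_nonneg {m n : Type*} [Fintype m] [Fintype n] [DecidableEq n]
    (A : Matrix m n ℂ) : 0 ≤ opNorm A := norm_nonneg _

/-- Schur multiplier given by a "label equality" pattern has norm at most `1`. -/
lemma labelSchur_le {n m : ℕ} (f : Fin n → ℕ) (g : Fin m → ℕ)
    (A : Matrix (Fin n) (Fin m) ℂ) :
    opNorm (Matrix.of fun i j => if f i = g j then A i j else 0) ≤ opNorm A := by
  set B : Matrix (Fin n) (Fin m) ℂ := Matrix.of fun i j => if f i = g j then A i j else 0 with hB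
  apply ContinuousLinearMap.opNorm_le_bound _ (opNorm_nonneg A)
  intro x
  set xk : ℕ → EuclideanSpace ℂ (Fin m) := fun k => WithLp.toLp 2 (fun j => if g j = k then x j else 0) with hxk
  have hBx : ∀ i : Fin n, (Matrix.toEuclideanLin B x) i
      = (Matrix.toEuclideanLin A (xk (f i))) i := by
    intro i
    show ∑ j, B i j * x j = ∑ j, A i j * (xk (f i)) j
    apply Finset.sum_congr rfl
    intro j _
    simp only [hB, hxk, Matrix.of_apply, WithLp.ofLp_toLp]
    by_cases h : f i = g j
    · simp [h]
    · rw [if_neg h, if_neg (fun hh => h hh.symm), zero_mul, mul_zero]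
  have key : ∑ i, ‖(Matrix.toEuclideanLin B x) i‖^2 ≤ (opNorm A * ‖x‖)^2 := by
    set K := Finset.image f Finset.univ with hK
    have e1 : ∑ i, ‖(Matrix.toEuclideanLin B x) i‖^2
        = ∑ k ∈ K, ∑ i ∈ Finset.univ.filter (fun i => f i = k),
            ‖(Matrix.toEuclideanLin A (xk k)) i‖^2 := by
      rw [← Finset.sum_fiberwise_of_maps_to
            (fun i _ => Finset.mem_image_of_mem f (Finset.mem_univ i))
            (fun i => ‖(Matrix.toEuclideanLin B x) i‖^2)]
      refine Finset.sum_congr rfl fun k _ => Finset.sum_congr rfl fun i hi => ?_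
      rw [hBx i, (Finset.mem_filter.mp hi).2]
    have e2 : ∀ k, ∑ i ∈ Finset.univ.filter (fun i => f i = k),
        ‖(Matrix.toEuclideanLin A (xk k)) i‖^2 ≤ (opNorm A)^2 * ‖xk k‖^2 := by
      intro k
      have h3 : ∑ i ∈ Finset.univ.filter (fun i => f i = k),
          ‖(Matrix.toEuclideanLin A (xk k)) i‖^2
          ≤ ∑ i, ‖(Matrix.toEuclideanLin A (xk k)) i‖^2 :=
        Finset.sum_le_sum_of_subset_of_nonneg (Finset.subset_univ _)
          (by intros; positivity)
      have h4 : ∑ i, ‖(Matrix.toEuclideanLin A (xk k)) i‖^2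
          = ‖Matrix.toEuclideanLin A (xk k)‖^2 := by
        rw [EuclideanSpace.norm_eq, Real.sq_sqrt (by positivity)]
      have h5 : ‖Matrix.toEuclideanLin A (xk k)‖ ≤ opNorm A * ‖xk k‖ :=
        (LinearMap.toContinuousLinearMap (Matrix.toEuclideanLin A)).le_opNorm _
      calc ∑ i ∈ Finset.univ.filter (fun i => f i = k),
            ‖(Matrix.toEuclideanLin A (xk k)) i‖^2
          ≤ ‖Matrix.toEuclideanLin A (xk k)‖^2 := h4 ▸ h3
        _ ≤ (opNorm A * ‖xk k‖)^2 := pow_le_pow_left₀ (norm_nonneg _) h5 2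
        _ = (opNorm A)^2 * ‖xk k‖^2 := by ring
    have h6 : ∀ k, ‖xk k‖^2 = ∑ j ∈ Finset.univ.filter (fun j => g j = k), ‖x j‖^2 := by
      intro k
      rw [EuclideanSpace.norm_eq, Real.sq_sqrt (by positivity), Finset.sum_filter]
      refine Finset.sum_congr rfl fun j _ => ?_
      by_cases h : g j = k
      · simp [hxk, h]
      · simp [hxk, h]
    have e3 : ∑ k ∈ K, ‖xk k‖^2 ≤ ‖x‖^2 := by
      have hdisj : (K : Set ℕ).PairwiseDisjoint
          (fun k => Finset.univ.filter (fun j => g j = k)) := by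
        intro a _ b _ hab
        simp only [Finset.disjoint_left, Finset.mem_filter]
        rintro j ⟨_, hja⟩ ⟨_, hjb⟩
        exact hab (hja ▸ hjb ▸ rfl)
      calc ∑ k ∈ K, ‖xk k‖^2
          = ∑ j ∈ K.biUnion (fun k => Finset.univ.filter (fun j => g j = k)), ‖x j‖^2 := by
            rw [Finset.sum_biUnion hdisj]
            exact Finset.sum_congr rfl fun k _ => h6 k
        _ ≤ ∑ j, ‖x j‖^2 :=
            Finset.sum_le_sum_of_subset_of_nonneg (Finset.subset_univ _)
              (by intros; positivity)
        _ = ‖x‖^2 := by rw [EuclideanSpace.norm_eq, Real.sq_sqrt (by positivity)]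
    calc ∑ i, ‖(Matrix.toEuclideanLin B x) i‖^2
        ≤ ∑ k ∈ K, (opNorm A)^2 * ‖xk k‖^2 := by
          rw [e1]; exact Finset.sum_le_sum fun k _ => e2 k
      _ = (opNorm A)^2 * ∑ k ∈ K, ‖xk k‖^2 := by rw [Finset.mul_sum]
      _ ≤ (opNorm A)^2 * ‖x‖^2 := mul_le_mul_of_nonneg_left e3 (by positivity)
      _ = (opNorm A * ‖x‖)^2 := by ring
  have h1 : ‖Matrix.toEuclideanLin B x‖
      = Real.sqrt (∑ i, ‖(Matrix.toEuclideanLin B x) i‖^2) := EuclideanSpace.norm_eq _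
  show ‖Matrix.toEuclideanLin B x‖ ≤ opNorm A * ‖x‖
  rw [h1]
  calc Real.sqrt (∑ i, ‖(Matrix.toEuclideanLin B x) i‖^2)
      ≤ Real.sqrt ((opNorm A * ‖x‖)^2) := Real.sqrt_le_sqrt key
    _ = opNorm A * ‖x‖ := Real.sqrt_sq (mul_nonneg (opNorm_nonneg A) (norm_nonneg x))

/-- column-side label at level `l` of a value `t` (the smaller side). -/
def labC (l t : ℕ) : ℕ := if Even (t / 2^l) then t / 2^l + 2 else 0
/-- row-side label at level `l` of a value `s` (the larger side). -/
def labR (l s : ℕ) : ℕ := if Even (s / 2^l) then 1 else s / 2^l + 1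

/-- the level-`l` condition on a pair `x < y`. -/
def lcond (l x y : ℕ) : Prop := x / 2^l % 2 = 0 ∧ y / 2^l = x / 2^l + 1

instance (l x y : ℕ) : Decidable (lcond l x y) := by unfold lcond; infer_instance

lemma labR_eq_labC_iff (l s t : ℕ) : labR l s = labC l t ↔ lcond l t s := by
  unfold labR labC lcond
  simp only [Nat.even_iff]
  split_ifs with h1 h2 h2 <;> constructor <;> intro h <;> first | omega | exact h.elim

lemma labC_eq_labR_iff (l s t : ℕ) : labC l t = labR l s ↔ lcond l t s := by
  rw [eq_comm, labR_eq_labC_iff]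

lemma lcond_lt {l x y : ℕ} (h : lcond l x y) : x < y := by
  obtain ⟨h1, h2⟩ := h
  by_contra hc
  have := Nat.div_le_div_right (c := 2^l) (le_of_not_gt hc)
  omega

lemma div_pow_succ (x l : ℕ) : x / 2^(l+1) = (x / 2^l) / 2 := by
  rw [pow_succ, Nat.div_div_eq_div_mul]

lemma div_pow_upward {x y a b : ℕ} (h : x / 2^a = y / 2^a) (hab : a ≤ b) :
    x / 2^b = y / 2^b := by
  have hx : x / 2^b = (x / 2^a) / 2^(b-a) := by
    rw [Nat.div_div_eq_div_mul, ← pow_add, Nat.add_sub_cancel' hab]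
  have hy : y / 2^b = (y / 2^a) / 2^(b-a) := by
    rw [Nat.div_div_eq_div_mul, ← pow_add, Nat.add_sub_cancel' hab]
  rw [hx, hy, h]

lemma lcond_existsUnique {x y K : ℕ} (hxy : x < y) (hyK : y ≤ K) :
    ∃! l, l ∈ Finset.range (Nat.clog 2 K + 1) ∧ lcond l x y := by
  have hex : ∃ l, x / 2^l = y / 2^l := by
    refine ⟨y, ?_⟩
    rw [Nat.div_eq_of_lt (lt_trans hxy (y.lt_two_pow_self)),
        Nat.div_eq_of_lt (y.lt_two_pow_self)]
  set e := Nat.find hex with he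
  have hspec : x / 2^e = y / 2^e := Nat.find_spec hex
  have h0 : 0 < e := by
    rcases Nat.eq_zero_or_pos e with h | h
    · exfalso; rw [h, pow_zero, Nat.div_one, Nat.div_one] at hspec; omega
    · exact h
  set l := e - 1 with hl
  have hne : x / 2^l ≠ y / 2^l := Nat.find_min hex (by omega)
  have heq : x / 2^(l+1) = y / 2^(l+1) := by
    have h : l + 1 = e := by omega
    rw [h]; exact hspec
  have hle : x / 2^l ≤ y / 2^l := Nat.div_le_div_right (le_of_lt hxy)
  rw [div_pow_succ x l, div_pow_succ y l] at heq
  have hcond : lcond l x y := by constructor <;> omega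
  have hK : l ≤ Nat.clog 2 K := by
    have h2 : y < 2 ^ (Nat.clog 2 K + 1) := by
      calc y ≤ K := hyK
        _ ≤ 2 ^ (Nat.clog 2 K) := Nat.le_pow_clog one_lt_two K
        _ < 2 ^ (Nat.clog 2 K + 1) := by
            rw [pow_succ]
            have h3 : 0 < (2:ℕ) ^ Nat.clog 2 K := by positivity
            omega
    have : e ≤ Nat.clog 2 K + 1 := Nat.find_le (by
      rw [Nat.div_eq_of_lt (lt_trans hxy h2), Nat.div_eq_of_lt h2])
    omega
  refine ⟨l, ⟨Finset.mem_range.mpr (by omega), hcond⟩, ?_⟩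
  rintro l' ⟨_, hev, hsum⟩
  have h1 : x / 2^l' ≠ y / 2^l' := by omega
  have h2 : x / 2^(l'+1) = y / 2^(l'+1) := by
    rw [div_pow_succ x l', div_pow_succ y l', hsum]; omega
  have hl'e : l' < e := by
    by_contra hc
    exact h1 (div_pow_upward hspec (le_of_not_gt hc))
  have : e ≤ l' + 1 := Nat.find_min' hex h2
  omega

lemma opNorm_sum_le {n m : ℕ} {ι : Type*} (s : Finset ι) (F : ι → Matrix (Fin n) (Fin m) ℂ) :
    opNorm (∑ l ∈ s, F l) ≤ ∑ l ∈ s, opNorm (F l) := by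
  unfold opNorm
  rw [map_sum Matrix.toEuclideanLin F s, map_sum LinearMap.toContinuousLinearMap _ s]
  exact norm_sum_le s _

lemma master_row {n m : ℕ} (K : ℕ) (p : Fin n → ℕ) (q : Fin m → ℕ) (hp : ∀ i, p i ≤ K)
    (A : Matrix (Fin n) (Fin m) ℂ) :
    opNorm (Matrix.of fun i j => if q j < p i then A i j else 0)
      ≤ ((1 + Nat.clog 2 K : ℕ) : ℝ) * opNorm A := by
  set L := Nat.clog 2 K with hL
  have hdec : (Matrix.of fun i j => if q j < p i then A i j else 0)
      = ∑ l ∈ Finset.range (L+1),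
          Matrix.of (fun i j => if labR l (p i) = labC l (q j) then A i j else 0) := by
    ext i j
    rw [Matrix.sum_apply]
    simp only [Matrix.of_apply]
    by_cases h : q j < p i
    · obtain ⟨l₀, ⟨hl₀mem, hl₀⟩, huniq⟩ := lcond_existsUnique h (hp i)
      rw [if_pos h, Finset.sum_eq_single_of_mem l₀ hl₀mem]
      · rw [if_pos ((labR_eq_labC_iff _ _ _).mpr hl₀)]
      · intro l hl hne
        rw [if_neg]
        intro hc
        exact hne (huniq l ⟨hl, (labR_eq_labC_iff _ _ _).mp hc⟩)
    · rw [if_neg h, Finset.sum_eq_zero]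
      intro l _
      rw [if_neg]
      intro hc
      exact h (lcond_lt ((labR_eq_labC_iff _ _ _).mp hc))
  rw [hdec]
  calc opNorm (∑ l ∈ Finset.range (L+1),
          Matrix.of (fun i j => if labR l (p i) = labC l (q j) then A i j else 0))
      ≤ ∑ l ∈ Finset.range (L+1),
          opNorm (Matrix.of (fun i j => if labR l (p i) = labC l (q j) then A i j else 0)) :=
        opNorm_sum_le _ _
    _ ≤ ∑ _l ∈ Finset.range (L+1), opNorm A :=
        Finset.sum_le_sum fun l _ => labelSchur_le (fun i => labR l (p i)) (fun j => labC l (q j)) A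
    _ = ((1 + L : ℕ):ℝ) * opNorm A := by
        rw [Finset.sum_const, Finset.card_range, nsmul_eq_mul]
        push_cast; ring

lemma master_col {n m : ℕ} (K : ℕ) (p : Fin n → ℕ) (q : Fin m → ℕ) (hq : ∀ j, q j ≤ K)
    (A : Matrix (Fin n) (Fin m) ℂ) :
    opNorm (Matrix.of fun i j => if p i < q j then A i j else 0)
      ≤ ((1 + Nat.clog 2 K : ℕ) : ℝ) * opNorm A := by
  set L := Nat.clog 2 K with hL
  have hdec : (Matrix.of fun i j => if p i < q j then A i j else 0)
      = ∑ l ∈ Finset.range (L+1),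
          Matrix.of (fun i j => if labC l (p i) = labR l (q j) then A i j else 0) := by
    ext i j
    rw [Matrix.sum_apply]
    simp only [Matrix.of_apply]
    by_cases h : p i < q j
    · obtain ⟨l₀, ⟨hl₀mem, hl₀⟩, huniq⟩ := lcond_existsUnique h (hq j)
      rw [if_pos h, Finset.sum_eq_single_of_mem l₀ hl₀mem]
      · rw [if_pos ((labC_eq_labR_iff _ _ _).mpr hl₀)]
      · intro l hl hne
        rw [if_neg]
        intro hc
        exact hne (huniq l ⟨hl, (labC_eq_labR_iff _ _ _).mp hc⟩)
    · rw [if_neg h, Finset.sum_eq_zero]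
      intro l _
      rw [if_neg]
      intro hc
      exact h (lcond_lt ((labC_eq_labR_iff _ _ _).mp hc))
  rw [hdec]
  calc opNorm (∑ l ∈ Finset.range (L+1),
          Matrix.of (fun i j => if labC l (p i) = labR l (q j) then A i j else 0))
      ≤ ∑ l ∈ Finset.range (L+1),
          opNorm (Matrix.of (fun i j => if labC l (p i) = labR l (q j) then A i j else 0)) :=
        opNorm_sum_le _ _
    _ ≤ ∑ _l ∈ Finset.range (L+1), opNorm A :=
        Finset.sum_le_sum fun l _ => labelSchur_le (fun i => labC l (p i)) (fun j => labR l (q j)) A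
    _ = ((1 + L : ℕ):ℝ) * opNorm A := by
        rw [Finset.sum_const, Finset.card_range, nsmul_eq_mul]
        push_cast; ring

/-- Norm bound for staircase Schur multipliers: if `M ∈ {0,1}^{n×m}` is such
that `M_{ij} = 1` implies `M_{i'j'} = 1` whenever `i' ≥ i` and `j' ≤ j`, then
the Schur (entrywise) multiplication by `M` has operator norm (as a map of the
spectral norm) at most `1 + ⌈log₂ (min n m)⌉`. -/
theorem staircase_schur_multiplier_norm (n m : ℕ) (hn : 0 < n) (hm : 0 < m)
    (M : Matrix (Fin n) (Fin m) ℂ)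
    (h01 : ∀ i j, M i j = 0 ∨ M i j = 1)
    (hstair : ∀ i j i' j', M i j = 1 → i ≤ i' → j' ≤ j → M i' j' = 1) :
    ∀ A : Matrix (Fin n) (Fin m) ℂ,
      opNorm (Matrix.hadamard M A) ≤ ((1 + Nat.clog 2 (min n m) : ℕ) : ℝ) * opNorm A := by
  intro A
  have hM01 : ∀ i j, M i j ≠ 1 → M i j = 0 := fun i j h => (h01 i j).resolve_right h
  set c : Fin n → ℕ := fun i => (Finset.univ.filter (fun j => M i j = 1)).card with hc
  have hcm : ∀ i, c i ≤ m := by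
    intro i
    calc c i ≤ Finset.univ.card := Finset.card_filter_le _ _
      _ = m := by simp
  have hMc : ∀ i j, M i j = 1 ↔ (j:ℕ) < c i := by
    intro i j
    constructor
    · intro h
      have hsub : Finset.Iic j ⊆ Finset.univ.filter (fun j' => M i j' = 1) := by
        intro j' hj'
        simp only [Finset.mem_filter, Finset.mem_univ, true_and]
        exact hstair i j i j' h le_rfl (Finset.mem_Iic.mp hj')
      have hcard := Finset.card_le_card hsub
      rw [Fin.card_Iic] at hcard
      have : (j:ℕ) + 1 ≤ c i := hcard
      omega
    · intro h
      by_contra hne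
      have h0 := hM01 i j hne
      have hsub : Finset.univ.filter (fun j' => M i j' = 1) ⊆ Finset.Iio j := by
        intro j' hj'
        simp only [Finset.mem_filter, Finset.mem_univ, true_and] at hj'
        rw [Finset.mem_Iio]
        by_contra hge
        have h1 : M i j = 1 := hstair i j' i j hj' le_rfl (le_of_not_gt hge)
        rw [h0] at h1
        exact one_ne_zero h1.symm
      have hcard := Finset.card_le_card hsub
      rw [Fin.card_Iio] at hcard
      have : c i ≤ (j:ℕ) := hcard
      omega
  set a : Fin m → ℕ := fun j => (Finset.univ.filter (fun i => M i j = 1)).card with ha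
  have han : ∀ j, a j ≤ n := by
    intro j
    calc a j ≤ Finset.univ.card := Finset.card_filter_le _ _
      _ = n := by simp
  have hMa : ∀ i j, M i j = 1 ↔ (n - 1 - (i:ℕ)) < a j := by
    intro i j
    have hin : (i:ℕ) < n := i.isLt
    constructor
    · intro h
      have hsub : Finset.Ici i ⊆ Finset.univ.filter (fun i' => M i' j = 1) := by
        intro i' hi'
        simp only [Finset.mem_filter, Finset.mem_univ, true_and]
        exact hstair i j i' j h (Finset.mem_Ici.mp hi') le_rfl
      have hcard := Finset.card_le_card hsub
      rw [Fin.card_Ici] at hcard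
      have : n - (i:ℕ) ≤ a j := hcard
      omega
    · intro h
      by_contra hne
      have h0 := hM01 i j hne
      have hsub : Finset.univ.filter (fun i' => M i' j = 1) ⊆ Finset.Ioi i := by
        intro i' hi'
        simp only [Finset.mem_filter, Finset.mem_univ, true_and] at hi'
        rw [Finset.mem_Ioi]
        by_contra hge
        have h1 : M i j = 1 := hstair i' j i j hi' (le_of_not_gt hge) le_rfl
        rw [h0] at h1
        exact one_ne_zero h1.symm
      have hcard := Finset.card_le_card hsub
      rw [Fin.card_Ioi] at hcard
      have : a j ≤ n - 1 - (i:ℕ) := hcard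
      omega
  have hbound1 : opNorm (Matrix.hadamard M A) ≤ ((1 + Nat.clog 2 m : ℕ):ℝ) * opNorm A := by
    have heq : Matrix.hadamard M A
        = Matrix.of fun (i : Fin n) (j : Fin m) => if ((j:ℕ) < c i) then A i j else 0 := by
      ext i j
      simp only [Matrix.hadamard_apply, Matrix.of_apply]
      by_cases h : M i j = 1
      · rw [h, one_mul, if_pos ((hMc i j).mp h)]
      · rw [hM01 i j h, zero_mul, if_neg (fun hcc => h ((hMc i j).mpr hcc))]
    rw [heq]
    exact master_row m c (fun j => (j:ℕ)) hcm A
  have hbound2 : opNorm (Matrix.hadamard M A) ≤ ((1 + Nat.clog 2 n : ℕ):ℝ) * opNorm A := by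
    have heq : Matrix.hadamard M A
        = Matrix.of fun (i : Fin n) (j : Fin m) => if ((n - 1 - (i:ℕ)) < a j) then A i j else 0 := by
      ext i j
      simp only [Matrix.hadamard_apply, Matrix.of_apply]
      by_cases h : M i j = 1
      · rw [h, one_mul, if_pos ((hMa i j).mp h)]
      · rw [hM01 i j h, zero_mul, if_neg (fun hcc => h ((hMa i j).mpr hcc))]
    rw [heq]
    exact master_col n (fun i => n - 1 - (i:ℕ)) a han A
  rcases le_total n m with h | h
  · rw [min_eq_left h]; exact hbound2
  · rw [min_eq_right h]; exact hbound1
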